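/- Let G be a nonempty connected simple graph, and for a vertex x let N(x) denote its set of neighbors in G. Then G is a Boolean graph (i.e., G is isomorphic to the zero-divisor graph Γ(R) of some Boolean ring R) if and only if the following four conditions hold: (1) G is uniquely determined: for all vertices x, y, N(x) = N(y) implies x = y; (2) G is uniquely complemented: for every vertex x there exists a vertex y with x ⊥ y, and whenever x ⊥ y and x ⊥ z one has N(y) = N(z), where x ⊥ y means that x and y are adjacent and no vertex of G is adjacent to both x and y; (3) for all vertices x, y with N(x) ∩ N(y) ≠ ∅, there exists a vertex z with N(z) = N(x) ∩ N(y); (4) there exists a Boolean semigroup S (a commutative semigroup with zero in which x·x = x for all x) such that Γ(S) is isomorphic to G. -/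

import Mathlib

universe u v w
/-- A commutative semigroup with a zero element `0` satisfying `0 * a = 0`. -/
class CommSemigroupWithZero (S : Type u) extends CommSemigroup S, Zero S where
  zero_mul' : ∀ a : S, 0 * a = 0

/-- The zero-divisor graph of `S`, as a simple graph on all of `S`:
distinct nonzero `x, y` are adjacent iff `x * y = 0`.  (The element `0` and the
non-zero-divisors are isolated vertices, so adjacency, end vertices and cycles
are exactly those of `Γ(S)`.) -/
def zdGraph (S : Type u) [CommSemigroupWithZero S] : SimpleGraph S where
  Adj x y := x ≠ y ∧ x * y = 0 ∧ x ≠ 0 ∧ y ≠ 0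
  symm := by
    constructor
    rintro x y ⟨h1, h2, h3, h4⟩
    exact ⟨h1.symm, by rwa [mul_comm], h4, h3⟩
  loopless := by
    constructor
    intro x h
    exact h.1 rfl

/-- `x` is a vertex of `Γ(S)`: a nonzero zero-divisor. -/
def IsVertex (S : Type u) [CommSemigroupWithZero S] (x : S) : Prop :=
  x ≠ 0 ∧ ∃ y : S, y ≠ 0 ∧ x * y = 0

/-- `x` is an end vertex of `Γ(S)`: it has exactly one neighbour. -/
def IsEndVertex (S : Type u) [CommSemigroupWithZero S] (x : S) : Prop :=
  ∃! y : S, (zdGraph S).Adj x y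
/-- The zero-divisor graph of `S` on its vertex set (the nonzero zero-divisors). -/
def zdvGraph (S : Type u) [CommSemigroupWithZero S] :
    SimpleGraph {x : S // x ≠ 0 ∧ ∃ y : S, y ≠ 0 ∧ x * y = 0} where
  Adj a b := a ≠ b ∧ (a : S) * (b : S) = 0
  symm := by
    constructor
    rintro a b ⟨h1, h2⟩
    exact ⟨h1.symm, by rwa [mul_comm]⟩
  loopless := by
    constructor
    intro a h
    exact h.1 rfl

/-- `G` is (isomorphic to) the zero-divisor graph of some commutative semigroup with zero. -/
def IsZDGraphOf {α : Type v} (G : SimpleGraph α) : Prop :=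
  ∃ (S : Type u) (inst : CommSemigroupWithZero S), Nonempty ((@zdvGraph S inst) ≃g G)

/-- The zero-divisor graph of a Boolean ring `R`, on its vertex set
(the nonzero zero-divisors). -/
def zdvGraphRing (R : Type u) [BooleanRing R] :
    SimpleGraph {x : R // x ≠ 0 ∧ ∃ y : R, y ≠ 0 ∧ x * y = 0} where
  Adj a b := a ≠ b ∧ (a : R) * (b : R) = 0
  symm := by
    constructor
    rintro a b ⟨h1, h2⟩
    exact ⟨h1.symm, by rwa [mul_comm]⟩
  loopless := by
    constructor
    intro a h
    exact h.1 rfl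

/-- `x ⊥ y` : `x` and `y` are adjacent in `G` and no vertex of `G` is adjacent to both,
i.e. the edge `x-y` lies on no triangle. -/
def Perp {α : Type v} (G : SimpleGraph α) (x y : α) : Prop :=
  G.Adj x y ∧ ∀ z : α, ¬ (G.Adj x z ∧ G.Adj y z)

section SemiSide

variable {S : Type u} [CommSemigroupWithZero S]

lemma zmul (a : S) : (0 : S) * a = 0 := CommSemigroupWithZero.zero_mul' a
lemma mulz (a : S) : a * (0 : S) = 0 := by rw [mul_comm]; exact zmul a

abbrev SV (S : Type u) [CommSemigroupWithZero S] : Type u :=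
  {x : S // x ≠ 0 ∧ ∃ y : S, y ≠ 0 ∧ x * y = 0}

lemma adjS (hB : ∀ a : S, a * a = a) (a v : SV S) :
    (zdvGraph S).Adj a v ↔ (a : S) * v = 0 := by
  constructor
  · exact fun h => h.2
  · intro h
    refine ⟨fun hav => ?_, h⟩
    cases hav
    rw [hB] at h
    exact a.2.1 h


/-- annihilator set of `x` among vertices -/
def annA (x : S) : Set (SV S) := {v | x * (v : S) = 0}

lemma mem_annA {x : S} {v : SV S} : v ∈ annA x ↔ x * (v : S) = 0 := Iff.rfl

lemma annA_zero : annA (0 : S) = Set.univ := by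
  ext v; simp [annA, zmul]

/-- Lemma B, core case: both vertices. -/
lemma lemB0 (hB : ∀ a : S, a * a = a)
    (h1S : ∀ a b : SV S, (∀ v : SV S, (a : S) * v = 0 ↔ (b : S) * v = 0) → a = b)
    (h2S : ∀ a : SV S, ∃ b : SV S, (a : S) * b = 0 ∧
      ∀ v : SV S, ¬ ((a : S) * v = 0 ∧ (b : S) * v = 0))
    (a c : SV S) (hsub : ∀ v : SV S, (a : S) * v = 0 → (c : S) * v = 0) :
    (c : S) * a = c := by
  obtain ⟨a', haa', hperp⟩ := h2S a
  have ha'c : (c : S) * a' = 0 := by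
    rw [mul_comm]
    have := hsub a' haa'
    rwa [mul_comm] at this
  have hd0 : (a : S) * c ≠ 0 := by
    intro h
    have := hsub c h
    rw [hB] at this
    exact c.2.1 this
  have hda' : (a : S) * c * (a' : S) = 0 := by
    rw [show (a : S) * c * (a' : S) = (a : S) * (a' : S) * c from by ac_rfl, haa', zmul]
  by_contra hne
  have hdc : ¬ ((a : S) * c = (c : S)) := by
    intro h
    exact hne (by rw [mul_comm]; exact h)
  have hnall : ¬ (∀ v : SV S, ((a : S) * c) * (v : S) = 0 ↔ (c : S) * v = 0) := by
    intro hall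
    apply hdc
    have := h1S ⟨(a : S) * c, hd0, a', a'.2.1, hda'⟩ c hall
    exact congrArg Subtype.val this
  obtain ⟨v, hv⟩ := not_forall.mp hnall
  have hforward : (c : S) * v = 0 → ((a : S) * c) * (v : S) = 0 := by
    intro h
    rw [show (a : S) * c * (v : S) = (a : S) * ((c : S) * v) from by ac_rfl, h, mulz]
  have hcv : (c : S) * v ≠ 0 := fun h => hv (iff_of_true (hforward h) h)
  have hdv : ((a : S) * c) * (v : S) = 0 := by
    by_contra h
    exact hv (iff_of_false h hcv)
  -- w := c * v is a vertex annihilating both a and a'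
  have hwd : ((c : S) * v) * ((a : S) * c) = 0 := by
    rw [show ((c : S) * v) * ((a : S) * c) = ((a : S) * c * (v : S)) * c from by ac_rfl,
      hdv, zmul]
  have hwa' : ((c : S) * v) * (a' : S) = 0 := by
    rw [show ((c : S) * v) * (a' : S) = ((c : S) * a') * (v : S) from by ac_rfl, ha'c, zmul]
  have hwa : ((c : S) * v) * (a : S) = 0 := by
    have h2 : ((c : S) * v * (a : S)) * (c : S) = 0 := by
      rw [show ((c : S) * v * (a : S)) * (c : S) = ((a : S) * c * (v : S)) * c from by ac_rfl,
        hdv, zmul]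
    have h3 : ((c : S) * v * (a : S)) * (c : S) = (c : S) * v * (a : S) := by
      calc ((c : S) * v * (a : S)) * (c : S) = ((c : S) * c) * ((v : S) * a) := by ac_rfl
        _ = (c : S) * ((v : S) * a) := by rw [hB]
        _ = (c : S) * v * (a : S) := by rw [mul_assoc]
    rw [← h3, h2]
  exact hperp ⟨(c : S) * v, hcv, a', a'.2.1, hwa'⟩
    ⟨by rw [mul_comm]; exact hwa, by rw [mul_comm]; exact hwa'⟩

end SemiSide

section SemiSide2

variable {S : Type u} [CommSemigroupWithZero S]

/-- the carrier of the Boolean algebra: 0, 1 and the vertices -/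
def Mset (one : S) : Set S :=
  {x | x = 0 ∨ x = one ∨ (x ≠ 0 ∧ ∃ y : S, y ≠ 0 ∧ x * y = 0)}

lemma vert_mem_Mset (one : S) (a : SV S) : (a : S) ∈ Mset one := Or.inr (Or.inr a.2)
lemma zero_mem_Mset (one : S) : (0 : S) ∈ Mset one := Or.inl rfl
lemma one_mem_Mset (one : S) : one ∈ Mset one := Or.inr (Or.inl rfl)

lemma Mset_mul {one : S} (hone : ∀ x : S, one * x = x) {a b : S}
    (ha : a ∈ Mset one) (hb : b ∈ Mset one) : a * b ∈ Mset one := by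
  rcases ha with rfl | heq | ⟨ha0, y, hy0, hay⟩
  · exact Or.inl (zmul b)
  · rw [heq, hone]; exact hb
  · by_cases h : a * b = 0
    · exact Or.inl h
    · refine Or.inr (Or.inr ⟨h, y, hy0, ?_⟩)
      rw [show a * b * y = a * y * b from by ac_rfl, hay, zmul]

lemma annA_one {one : S} (hone : ∀ x : S, one * x = x) : annA one = (∅ : Set (SV S)) := by
  ext v
  simp only [annA, Set.mem_setOf_eq, Set.mem_empty_iff_false, iff_false]
  rw [hone]
  exact v.2.1

lemma annA_vert_ne_univ (hB : ∀ a : S, a * a = a) (a : SV S) :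
    annA (a : S) ≠ (Set.univ : Set (SV S)) := by
  intro h
  have : a ∈ annA (a : S) := h ▸ Set.mem_univ a
  rw [mem_annA, hB] at this
  exact a.2.1 this

/-- Lemma B: for `a, c ∈ M`, `ann a ⊆ ann c ↔ c ≤ a`. -/
lemma lemB (hB : ∀ a : S, a * a = a) {one : S} (hone : ∀ x : S, one * x = x)
    (hne : Nonempty (SV S))
    (h1S : ∀ a b : SV S, (∀ v : SV S, (a : S) * v = 0 ↔ (b : S) * v = 0) → a = b)
    (h2S : ∀ a : SV S, ∃ b : SV S, (a : S) * b = 0 ∧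
      ∀ v : SV S, ¬ ((a : S) * v = 0 ∧ (b : S) * v = 0))
    {a c : S} (ha : a ∈ Mset one) (hc : c ∈ Mset one) :
    annA a ⊆ annA c ↔ c * a = c := by
  constructor
  · intro hsub
    rcases hc with rfl | hceq | hcv
    · exact zmul a
    · rcases ha with rfl | haeq | hav
      · obtain ⟨v⟩ := hne
        have hv := hsub (show v ∈ annA (0 : S) from zmul _)
        rw [mem_annA, hceq, hone] at hv
        exact absurd hv v.2.1
      · rw [haeq, hceq]; exact hone one
      · obtain ⟨y, hy0, hay⟩ := hav.2
        have hyv : (⟨y, hy0, a, hav.1, by rw [mul_comm]; exact hay⟩ : SV S) ∈ annA a := hay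
        have := hsub hyv
        rw [mem_annA, hceq, hone] at this
        exact absurd this hy0
    · rcases ha with rfl | haeq | hav
      · have := hsub (show (⟨c, hcv⟩ : SV S) ∈ annA (0 : S) from zmul _)
        rw [mem_annA, hB] at this
        exact absurd this hcv.1
      · rw [haeq, mul_comm]; exact hone c
      · exact lemB0 hB h1S h2S ⟨a, hav⟩ ⟨c, hcv⟩ (fun v hv => hsub hv)
  · intro hca v hv
    rw [mem_annA] at hv ⊢
    rw [← hca, mul_assoc, hv, mulz]

lemma annA_inj (hB : ∀ a : S, a * a = a) {one : S} (hone : ∀ x : S, one * x = x)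
    (hne : Nonempty (SV S))
    (h1S : ∀ a b : SV S, (∀ v : SV S, (a : S) * v = 0 ↔ (b : S) * v = 0) → a = b)
    (h2S : ∀ a : SV S, ∃ b : SV S, (a : S) * b = 0 ∧
      ∀ v : SV S, ¬ ((a : S) * v = 0 ∧ (b : S) * v = 0))
    {a c : S} (ha : a ∈ Mset one) (hc : c ∈ Mset one) (h : annA a = annA c) : a = c := by
  have h1 := (lemB hB hone hne h1S h2S ha hc).mp h.subset
  have h2 := (lemB hB hone hne h1S h2S hc ha).mp h.symm.subset
  rw [← h2, mul_comm, h1]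

lemma lowerA {a b : S} : annA a ⊆ annA (a * b) := by
  intro v hv
  rw [mem_annA] at hv ⊢
  rw [show a * b * (v : S) = a * (v : S) * b from by ac_rfl, hv, zmul]

lemma glbMin (hB : ∀ a : S, a * a = a) {one : S} (hone : ∀ x : S, one * x = x)
    (hne : Nonempty (SV S))
    (h1S : ∀ a b : SV S, (∀ v : SV S, (a : S) * v = 0 ↔ (b : S) * v = 0) → a = b)
    (h2S : ∀ a : SV S, ∃ b : SV S, (a : S) * b = 0 ∧
      ∀ v : SV S, ¬ ((a : S) * v = 0 ∧ (b : S) * v = 0))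
    {a b c : S} (ha : a ∈ Mset one) (hb : b ∈ Mset one) (hc : c ∈ Mset one)
    (sub1 : annA a ⊆ annA c) (sub2 : annA b ⊆ annA c) : annA (a * b) ⊆ annA c := by
  have hca := (lemB hB hone hne h1S h2S ha hc).mp sub1
  have hcb := (lemB hB hone hne h1S h2S hb hc).mp sub2
  apply (lemB hB hone hne h1S h2S (Mset_mul hone ha hb) hc).mpr
  rw [← mul_assoc, hca, hcb]

lemma interA {one : S} (hone : ∀ x : S, one * x = x)
    (h3S : ∀ a b c : SV S, (a : S) * c = 0 → (b : S) * c = 0 →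
      ∃ z : SV S, ∀ v : SV S, ((z : S) * v = 0 ↔ ((a : S) * v = 0 ∧ (b : S) * v = 0)))
    {a b : S} (ha : a ∈ Mset one) (hb : b ∈ Mset one) :
    ∃ m ∈ Mset one, annA a ∩ annA b = annA m := by
  rcases ha with rfl | haeq | hav
  · exact ⟨b, hb, by rw [annA_zero, Set.univ_inter]⟩
  · exact ⟨one, one_mem_Mset one, by rw [haeq, annA_one hone, Set.empty_inter]⟩
  · rcases hb with rfl | hbeq | hbv
    · exact ⟨a, Or.inr (Or.inr hav), by rw [annA_zero, Set.inter_univ]⟩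
    · exact ⟨one, one_mem_Mset one,
        by rw [hbeq, annA_one hone, Set.inter_empty]⟩
    · by_cases hcom : ∃ v : SV S, a * (v : S) = 0 ∧ b * (v : S) = 0
      · obtain ⟨c, hac, hbc⟩ := hcom
        obtain ⟨z, hz⟩ := h3S ⟨a, hav⟩ ⟨b, hbv⟩ c (by exact hac) (by exact hbc)
        refine ⟨(z : S), vert_mem_Mset one z, ?_⟩
        ext v
        simp only [Set.mem_inter_iff, mem_annA]
        exact (hz v).symm
      · refine ⟨one, one_mem_Mset one, ?_⟩
        rw [annA_one hone]
        ext v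
        simp only [Set.mem_inter_iff, mem_annA, Set.mem_empty_iff_false, iff_false]
        exact fun hv => hcom ⟨v, hv.1, hv.2⟩

lemma complA {one : S} (hone : ∀ x : S, one * x = x)
    (h2S : ∀ a : SV S, ∃ b : SV S, (a : S) * b = 0 ∧
      ∀ v : SV S, ¬ ((a : S) * v = 0 ∧ (b : S) * v = 0))
    {a : S} (ha : a ∈ Mset one) :
    ∃ b ∈ Mset one, a * b = 0 ∧ annA a ∩ annA b = ∅ := by
  rcases ha with rfl | haeq | hav
  · exact ⟨one, one_mem_Mset one, zmul one,
      by rw [annA_one hone, Set.inter_empty]⟩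
  · exact ⟨0, zero_mem_Mset one, by rw [haeq]; exact mulz one,
      by rw [haeq, annA_one hone, Set.empty_inter]⟩
  · obtain ⟨b, hab, hcl⟩ := h2S ⟨a, hav⟩
    refine ⟨(b : S), vert_mem_Mset one b, by exact hab, ?_⟩
    ext v
    simp only [Set.mem_inter_iff, mem_annA, Set.mem_empty_iff_false, iff_false]
    exact fun hv => hcl v ⟨hv.1, hv.2⟩

lemma distribA (hB : ∀ a : S, a * a = a) {a b c d e : S}
    (hd : annA d = annA a ∩ annA b) (he : annA e = annA a ∩ annA c) :
    annA a ∩ annA (b * c) ⊆ annA (d * e) := by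
  rintro v ⟨hva, hvbc⟩
  rw [mem_annA] at hva hvbc ⊢
  obtain ⟨y, hy0, hvy⟩ := v.2.2
  have step1 : e * (b * (v : S)) = 0 := by
    by_cases hu : b * (v : S) = 0
    · rw [hu, mulz]
    · have hu2 : (b * (v : S)) * y = 0 := by
        rw [show b * (v : S) * y = b * ((v : S) * y) from by ac_rfl, hvy, mulz]
      have huv : (⟨b * (v : S), hu, y, hy0, hu2⟩ : SV S) ∈ annA a ∩ annA c := by
        constructor
        · show a * (b * (v : S)) = 0
          rw [show a * (b * (v : S)) = b * (a * (v : S)) from by ac_rfl, hva, mulz]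
        · show c * (b * (v : S)) = 0
          rw [show c * (b * (v : S)) = b * c * (v : S) from by ac_rfl, hvbc]
      rw [← he] at huv
      exact huv
  by_cases ht : e * (v : S) = 0
  · rw [show d * e * (v : S) = d * (e * (v : S)) from by ac_rfl, ht, mulz]
  · have ht2 : (e * (v : S)) * y = 0 := by
      rw [show e * (v : S) * y = e * ((v : S) * y) from by ac_rfl, hvy, mulz]
    have htv : (⟨e * (v : S), ht, y, hy0, ht2⟩ : SV S) ∈ annA a ∩ annA b := by
      constructor
      · show a * (e * (v : S)) = 0
        rw [show a * (e * (v : S)) = e * (a * (v : S)) from by ac_rfl, hva, mulz]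
      · show b * (e * (v : S)) = 0
        rw [show b * (e * (v : S)) = e * (b * (v : S)) from by ac_rfl, step1]
    rw [← hd] at htv
    have : d * (e * (v : S)) = 0 := htv
    rw [show d * e * (v : S) = d * (e * (v : S)) from by ac_rfl, this]

end SemiSide2

section Cons

variable {S : Type u} [CommSemigroupWithZero S]

abbrev Rcar (one : S) : Type u := {B : Set (SV S) // ∃ m ∈ Mset one, B = annA m}

def mkR (one : S) (m : S) (hm : m ∈ Mset one) : Rcar one := ⟨annA m, m, hm, rfl⟩

instance instPO (one : S) : PartialOrder (Rcar one) where
  le X Y := Y.1 ⊆ X.1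
  lt X Y := Y.1 ⊆ X.1 ∧ ¬ X.1 ⊆ Y.1
  lt_iff_le_not_ge X Y := Iff.rfl
  le_refl X := subset_rfl
  le_trans X Y Z h h' := fun s hs => h (h' hs)
  le_antisymm X Y h h' := Subtype.ext (Set.Subset.antisymm h' h)

noncomputable def repR {one : S} (X : Rcar one) : S := X.2.choose
lemma repR_mem {one : S} (X : Rcar one) : repR X ∈ Mset one := X.2.choose_spec.1
lemma repR_ann {one : S} (X : Rcar one) : X.1 = annA (repR X) := X.2.choose_spec.2
lemma mkR_repR {one : S} (X : Rcar one) : mkR one (repR X) (repR_mem X) = X :=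
  (Subtype.ext (repR_ann X)).symm

theorem mainCons (hB : ∀ a : S, a * a = a) (one : S) (hone : ∀ x : S, one * x = x)
    (hne : Nonempty (SV S))
    (h1S : ∀ a b : SV S, (∀ v : SV S, (a : S) * v = 0 ↔ (b : S) * v = 0) → a = b)
    (h2S : ∀ a : SV S, ∃ b : SV S, (a : S) * b = 0 ∧
      ∀ v : SV S, ¬ ((a : S) * v = 0 ∧ (b : S) * v = 0))
    (h3S : ∀ a b c : SV S, (a : S) * c = 0 → (b : S) * c = 0 →
      ∃ z : SV S, ∀ v : SV S, ((z : S) * v = 0 ↔ ((a : S) * v = 0 ∧ (b : S) * v = 0))) :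
    ∃ (R : Type u) (inst : BooleanRing R),
      Nonempty ((@zdvGraphRing R inst) ≃g zdvGraph S) := by
  classical
  have repR_mkR : ∀ (m : S) (hm : m ∈ Mset one), repR (mkR one m hm) = m := by
    intro m hm
    exact annA_inj hB hone hne h1S h2S (repR_mem _) hm (repR_ann (mkR one m hm)).symm
  -- lattice operations
  let supR : Rcar one → Rcar one → Rcar one := fun X Y => ⟨X.1 ∩ Y.1, by
    obtain ⟨m, hm, hEq⟩ := interA hone h3S (repR_mem X) (repR_mem Y)
    refine ⟨m, hm, ?_⟩
    rw [repR_ann X, repR_ann Y]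
    exact hEq⟩
  let infR : Rcar one → Rcar one → Rcar one := fun X Y =>
    mkR one (repR X * repR Y) (Mset_mul hone (repR_mem X) (repR_mem Y))
  letI instL : Lattice (Rcar one) :=
    { instPO one with
      lt := (instPO one).lt
      lt_iff_le_not_ge := (instPO one).lt_iff_le_not_ge
      sup := supR
      le_sup_left := fun X Y => by exact Set.inter_subset_left
      le_sup_right := fun X Y => by exact Set.inter_subset_right
      sup_le := fun X Y Z h1 h2 => by exact Set.subset_inter h1 h2
      inf := infR
      inf_le_left := fun X Y => by
        show X.1 ⊆ annA (repR X * repR Y)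
        rw [repR_ann X]
        exact lowerA
      inf_le_right := fun X Y => by
        show Y.1 ⊆ annA (repR X * repR Y)
        rw [repR_ann Y, mul_comm]
        exact lowerA
      le_inf := fun Z X Y hx hy => by
        show annA (repR X * repR Y) ⊆ Z.1
        have hx' : annA (repR X) ⊆ annA (repR Z) := by
          rw [← repR_ann X, ← repR_ann Z]; exact hx
        have hy' : annA (repR Y) ⊆ annA (repR Z) := by
          rw [← repR_ann Y, ← repR_ann Z]; exact hy
        rw [repR_ann Z]
        exact glbMin hB hone hne h1S h2S (repR_mem X) (repR_mem Y) (repR_mem Z) hx' hy' }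
  letI instDL : DistribLattice (Rcar one) :=
    { instL with
      le_sup_inf := fun X Y Z => by
        show (supR X (infR Y Z)).1 ⊆ (infR (supR X Y) (supR X Z)).1
        have hd : annA (repR (supR X Y)) = annA (repR X) ∩ annA (repR Y) := by
          rw [← repR_ann (supR X Y)]
          show X.1 ∩ Y.1 = _
          rw [repR_ann X, repR_ann Y]
        have he : annA (repR (supR X Z)) = annA (repR X) ∩ annA (repR Z) := by
          rw [← repR_ann (supR X Z)]
          show X.1 ∩ Z.1 = _
          rw [repR_ann X, repR_ann Z]
        have main := distribA (a := repR X) (b := repR Y) (c := repR Z) hB hd he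
        show X.1 ∩ (infR Y Z).1 ⊆ annA (repR (supR X Y) * repR (supR X Z))
        rw [repR_ann X]
        exact main }
  let complR : Rcar one → Rcar one := fun X =>
    mkR one (complA hone h2S (repR_mem X)).choose
      (complA hone h2S (repR_mem X)).choose_spec.1
  have complR_rep : ∀ X : Rcar one,
      repR (complR X) = (complA hone h2S (repR_mem X)).choose := fun X => repR_mkR _ _
  have complR_mul : ∀ X : Rcar one, repR X * repR (complR X) = 0 := by
    intro X
    rw [complR_rep X]
    exact (complA hone h2S (repR_mem X)).choose_spec.2.1
  have complR_ann : ∀ X : Rcar one, annA (repR X) ∩ annA (repR (complR X)) = ∅ := by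
    intro X
    rw [complR_rep X]
    exact (complA hone h2S (repR_mem X)).choose_spec.2.2
  letI instBA : BooleanAlgebra (Rcar one) :=
    { instDL with
      compl := complR
      top := mkR one one (one_mem_Mset one)
      bot := mkR one 0 (zero_mem_Mset one)
      le_top := fun X => by
        show (mkR one one (one_mem_Mset one)).1 ⊆ X.1
        show annA one ⊆ X.1
        rw [annA_one hone]
        exact Set.empty_subset _
      bot_le := fun X => by
        show X.1 ⊆ (mkR one 0 (zero_mem_Mset one)).1
        show X.1 ⊆ annA 0
        rw [annA_zero]
        exact Set.subset_univ _
      inf_compl_le_bot := fun X => by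
        show (mkR one 0 (zero_mem_Mset one)).1 ⊆ (infR X (complR X)).1
        show annA (0 : S) ⊆ annA (repR X * repR (complR X))
        rw [complR_mul X]
      top_le_sup_compl := fun X => by
        show (supR X (complR X)).1 ⊆ (mkR one one (one_mem_Mset one)).1
        show X.1 ∩ (complR X).1 ⊆ annA one
        rw [annA_one hone, repR_ann X, repR_ann (complR X), complR_ann X]
      sdiff := fun X Y => infR X (complR Y)
      himp := fun X Y => supR Y (complR X)
      sdiff_eq := fun X Y => rfl
      himp_eq := fun X Y => rfl }
  refine ⟨AsBoolRing (Rcar one), inferInstance, ⟨?_⟩⟩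
  -- basic identifications
  have bot_eq : (⊥ : Rcar one) = mkR one 0 (zero_mem_Mset one) := rfl
  have top_eq : (⊤ : Rcar one) = mkR one one (one_mem_Mset one) := rfl
  have infmk : ∀ (a : S) (ha : a ∈ Mset one) (b : S) (hb : b ∈ Mset one),
      (mkR one a ha ⊓ mkR one b hb) = mkR one (a * b) (Mset_mul hone ha hb) := by
    intro a ha b hb
    apply Subtype.ext
    show annA (repR (mkR one a ha) * repR (mkR one b hb)) = annA (a * b)
    rw [repR_mkR, repR_mkR]
  have mkinj : ∀ (a : S) (ha : a ∈ Mset one) (b : S) (hb : b ∈ Mset one),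
      mkR one a ha = mkR one b hb → a = b := by
    intro a ha b hb h
    exact annA_inj hB hone hne h1S h2S ha hb (congrArg Subtype.val h)
  -- the vertex map
  have vertpf : ∀ a : SV S, (toBoolRing (mkR one (a : S) (vert_mem_Mset one a)) :
      AsBoolRing (Rcar one)) ≠ 0 ∧ ∃ y : AsBoolRing (Rcar one), y ≠ 0 ∧
      toBoolRing (mkR one (a : S) (vert_mem_Mset one a)) * y = 0 := by
    intro a
    have hmkne : ∀ (m : S) (hm : m ∈ Mset one), annA m ≠ Set.univ →
        (toBoolRing (mkR one m hm) : AsBoolRing (Rcar one)) ≠ 0 := by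
      intro m hm hnu h
      apply hnu
      have : mkR one m hm = (⊥ : Rcar one) := by
        rw [← toBoolRing_bot] at h
        exact toBoolRing_inj.mp h
      rw [bot_eq] at this
      have := congrArg Subtype.val this
      rw [show (mkR one m hm).1 = annA m from rfl] at this
      rw [this]
      exact annA_zero
    obtain ⟨y, hy0, hay⟩ := a.2.2
    have hyv : (⟨y, hy0, a, a.2.1, by rw [mul_comm]; exact hay⟩ : SV S) = (⟨y, hy0, a, a.2.1,
      by rw [mul_comm]; exact hay⟩ : SV S) := rfl
    refine ⟨hmkne _ _ (annA_vert_ne_univ hB a), ?_⟩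
    refine ⟨toBoolRing (mkR one y (vert_mem_Mset one ⟨y, hy0, a, a.2.1,
      by rw [mul_comm]; exact hay⟩)), hmkne _ _ (annA_vert_ne_univ hB ⟨y, hy0, a, a.2.1,
      by rw [mul_comm]; exact hay⟩), ?_⟩
    rw [← toBoolRing_inf, infmk]
    have : mkR one ((a : S) * y) (Mset_mul hone (vert_mem_Mset one a) (vert_mem_Mset one
        ⟨y, hy0, a, a.2.1, by rw [mul_comm]; exact hay⟩)) = (⊥ : Rcar one) := by
      rw [bot_eq]
      apply Subtype.ext
      show annA ((a : S) * y) = annA 0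
      rw [hay]
    rw [this, toBoolRing_bot]
  let φ : SV S → {x : AsBoolRing (Rcar one) // x ≠ 0 ∧ ∃ y, y ≠ 0 ∧ x * y = 0} :=
    fun a => ⟨toBoolRing (mkR one (a : S) (vert_mem_Mset one a)), vertpf a⟩
  have φinj : Function.Injective φ := by
    intro a b h
    have h1 := congrArg Subtype.val h
    have h2 : mkR one (a : S) (vert_mem_Mset one a) = mkR one (b : S) (vert_mem_Mset one b) :=
      toBoolRing_inj.mp h1
    exact Subtype.ext (mkinj _ _ _ _ h2)
  have φsurj : Function.Surjective φ := by
    intro X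
    have hXval : toBoolRing (ofBoolRing X.1) = X.1 := toBoolRing_ofBoolRing _
    set r : Rcar one := ofBoolRing X.1 with hr
    rcases repR_mem r with h0 | h1 | hv
    · exfalso
      apply X.2.1
      rw [← hXval, ← toBoolRing_bot]
      congr 1
      rw [← mkR_repR r, bot_eq]
      apply Subtype.ext
      show annA (repR r) = annA 0
      rw [h0]
    · exfalso
      obtain ⟨y, hy0, hXy⟩ := X.2.2
      apply hy0
      have hrtop : r = (⊤ : Rcar one) := by
        rw [← mkR_repR r, top_eq]
        apply Subtype.ext
        show annA (repR r) = annA one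
        rw [h1]
      have : ofBoolRing (X.1 * y) = ofBoolRing X.1 ⊓ ofBoolRing y := ofBoolRing_mul _ _
      rw [hXy, ofBoolRing_zero, ← hr, hrtop, top_inf_eq] at this
      rw [← toBoolRing_ofBoolRing y, this.symm, toBoolRing_bot]
    · refine ⟨⟨repR r, hv⟩, ?_⟩
      apply Subtype.ext
      show toBoolRing (mkR one (repR r) _) = X.1
      rw [← hXval]
      congr 1
      exact (Subtype.ext (repR_ann r)).symm
  have φadj : ∀ a b : SV S,
      (zdvGraphRing (AsBoolRing (Rcar one))).Adj (φ a) (φ b) ↔ (zdvGraph S).Adj a b := by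
    intro a b
    constructor
    · rintro ⟨hne', hmul⟩
      refine ⟨fun h => hne' (congrArg φ h), ?_⟩
      have : toBoolRing (mkR one (a : S) (vert_mem_Mset one a) ⊓
          mkR one (b : S) (vert_mem_Mset one b)) = (0 : AsBoolRing (Rcar one)) := by
        rw [toBoolRing_inf]; exact hmul
      rw [infmk, ← toBoolRing_bot] at this
      have h2 := toBoolRing_inj.mp this
      rw [bot_eq] at h2
      have h3 := mkinj _ _ _ _ h2
      exact h3
    · rintro ⟨hne', hmul⟩
      refine ⟨fun h => hne' (φinj h), ?_⟩
      show toBoolRing (mkR one (a : S) _) * toBoolRing (mkR one (b : S) _) = 0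
      rw [← toBoolRing_inf, infmk, ← toBoolRing_bot]
      congr 1
      rw [bot_eq]
      apply Subtype.ext
      show annA ((a : S) * (b : S)) = annA 0
      rw [hmul]
  let ψ : zdvGraph S ≃g zdvGraphRing (AsBoolRing (Rcar one)) :=
    { toEquiv := Equiv.ofBijective φ ⟨φinj, φsurj⟩
      map_rel_iff' := fun {a b} => φadj a b }
  exact ψ.symm

end Cons

section Bridge

variable {S : Type u} [CommSemigroupWithZero S]

@[reducible]
def withOneCSWZ (S : Type u) [CommSemigroupWithZero S] : CommSemigroupWithZero (WithOne S) :=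
  { (inferInstance : CommSemigroup (WithOne S)) with
    zero := ((0 : S) : WithOne S)
    zero_mul' := by
      intro a
      show ((0 : S) : WithOne S) * a = ((0 : S) : WithOne S)
      induction a using WithOne.recOneCoe with
      | one => exact mul_one _
      | coe x => rw [← WithOne.coe_mul, zmul] }

theorem wIso_ex (S : Type u) [CommSemigroupWithZero S] :
    Nonempty ((zdvGraph S) ≃g (@zdvGraph (WithOne S) (withOneCSWZ S))) := by
  letI := withOneCSWZ S
  have hz : (0 : WithOne S) = ((0 : S) : WithOne S) := rfl
  have coe0 : ∀ x : S, (x : WithOne S) = 0 ↔ x = 0 := by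
    intro x
    rw [hz]
    exact WithOne.coe_inj
  let g : SV S → SV (WithOne S) := fun a =>
    ⟨(a.1 : WithOne S), fun h => a.2.1 ((coe0 a.1).mp h), by
      obtain ⟨y, hy0, hay⟩ := a.2.2
      refine ⟨(y : WithOne S), fun h => hy0 ((coe0 y).mp h), ?_⟩
      rw [← WithOne.coe_mul, hay, hz]⟩
  have ginj : Function.Injective g := by
    intro a b h
    exact Subtype.ext (WithOne.coe_inj.mp (congrArg Subtype.val h))
  have gsurj : Function.Surjective g := by
    intro b
    have hb1 : b.1 ≠ 1 := by
      intro h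
      obtain ⟨y, hy0, hby⟩ := b.2.2
      rw [h, one_mul] at hby
      exact hy0 hby
    obtain ⟨x, hx⟩ := WithOne.ne_one_iff_exists.mp hb1
    obtain ⟨y, hy0, hby⟩ := b.2.2
    have hy1 : y ≠ 1 := by
      intro h
      rw [h, mul_one] at hby
      exact b.2.1 hby
    obtain ⟨y', hy'⟩ := WithOne.ne_one_iff_exists.mp hy1
    have hx0 : x ≠ 0 := by
      intro h
      apply b.2.1
      rw [← hx, h, ← hz]
    have hy'0 : y' ≠ 0 := by
      intro h
      apply hy0
      rw [← hy', h, ← hz]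
    have hxy : x * y' = 0 := by
      have : ((x * y' : S) : WithOne S) = ((0 : S) : WithOne S) := by
        rw [WithOne.coe_mul, hx, hy', ← hz]
        exact hby
      exact WithOne.coe_inj.mp this
    exact ⟨⟨x, hx0, y', hy'0, hxy⟩, Subtype.ext hx⟩
  have gadj : ∀ a b : SV S,
      (zdvGraph (WithOne S)).Adj (g a) (g b) ↔ (zdvGraph S).Adj a b := by
    intro a b
    constructor
    · rintro ⟨hne', hmul⟩
      refine ⟨fun h => hne' (congrArg g h), ?_⟩
      apply WithOne.coe_inj.mp
      rw [WithOne.coe_mul, ← hz]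
      exact hmul
    · rintro ⟨hne', hmul⟩
      refine ⟨fun h => hne' (ginj h), ?_⟩
      show ((a.1 : WithOne S)) * (b.1 : WithOne S) = 0
      rw [← WithOne.coe_mul, hmul, hz]
  exact ⟨{ toEquiv := Equiv.ofBijective g ⟨ginj, gsurj⟩, map_rel_iff' := fun {a b} => gadj a b }⟩

end Bridge

section Transfer

variable {S : Type u} [CommSemigroupWithZero S] {α : Type v} {G : SimpleGraph α}

theorem keyAdj (hB : ∀ a : S, a * a = a) (e : zdvGraph S ≃g G) (c : SV S) (w : α) :
    G.Adj (e c) w ↔ (c : S) * (e.symm w : S) = 0 := by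
  rw [← adjS hB]
  conv_lhs => rw [← e.apply_symm_apply w]
  exact e.map_adj_iff

theorem transfer1 (hB : ∀ a : S, a * a = a) (e : zdvGraph S ≃g G)
    (h1 : ∀ x y : α, G.neighborSet x = G.neighborSet y → x = y) :
    ∀ a b : SV S, (∀ v : SV S, (a : S) * v = 0 ↔ (b : S) * v = 0) → a = b := by
  intro a b h
  have heq : e a = e b := by
    apply h1
    ext w
    simp only [SimpleGraph.mem_neighborSet]
    rw [keyAdj hB e a w, keyAdj hB e b w]
    exact h (e.symm w)
  exact e.toEquiv.injective heq

theorem transfer2 (hB : ∀ a : S, a * a = a) (e : zdvGraph S ≃g G)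
    (h2 : ∀ x : α, ∃ y : α, Perp G x y) :
    ∀ a : SV S, ∃ b : SV S, (a : S) * b = 0 ∧
      ∀ v : SV S, ¬ ((a : S) * v = 0 ∧ (b : S) * v = 0) := by
  intro a
  obtain ⟨y, hy⟩ := h2 (e a)
  refine ⟨e.symm y, (keyAdj hB e a y).mp hy.1, ?_⟩
  rintro v ⟨hav, hbv⟩
  apply hy.2 (e v)
  constructor
  · exact e.map_adj_iff.mpr ((adjS hB a v).mpr hav)
  · conv_lhs => rw [← e.apply_symm_apply y]
    exact e.map_adj_iff.mpr ((adjS hB (e.symm y) v).mpr hbv)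

theorem transfer3 (hB : ∀ a : S, a * a = a) (e : zdvGraph S ≃g G)
    (h3 : ∀ x y : α, (G.neighborSet x ∩ G.neighborSet y).Nonempty →
      ∃ z : α, G.neighborSet z = G.neighborSet x ∩ G.neighborSet y) :
    ∀ a b c : SV S, (a : S) * c = 0 → (b : S) * c = 0 →
      ∃ z : SV S, ∀ v : SV S, ((z : S) * v = 0 ↔ ((a : S) * v = 0 ∧ (b : S) * v = 0)) := by
  intro a b c hac hbc
  obtain ⟨z, hz⟩ := h3 (e a) (e b) ⟨e c, by
    constructor
    · exact e.map_adj_iff.mpr ((adjS hB a c).mpr hac)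
    · exact e.map_adj_iff.mpr ((adjS hB b c).mpr hbc)⟩
  refine ⟨e.symm z, ?_⟩
  intro v
  have hmem : e v ∈ G.neighborSet z ↔ e v ∈ G.neighborSet (e a) ∩ G.neighborSet (e b) := by
    rw [hz]
  simp only [SimpleGraph.mem_neighborSet, Set.mem_inter_iff] at hmem
  have h1' : G.Adj z (e v) ↔ (e.symm z : S) * (v : S) = 0 := by
    conv_lhs => rw [← e.apply_symm_apply z]
    rw [e.map_adj_iff, adjS hB]
  have h2' : G.Adj (e a) (e v) ↔ (a : S) * (v : S) = 0 := by
    rw [e.map_adj_iff, adjS hB]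
  have h3' : G.Adj (e b) (e v) ↔ (b : S) * (v : S) = 0 := by
    rw [e.map_adj_iff, adjS hB]
  rw [← h1', ← h2', ← h3']
  exact hmem

end Transfer

section RingSide

variable {R : Type u} [BooleanRing R]

abbrev RV (R : Type u) [BooleanRing R] : Type u :=
  {x : R // x ≠ 0 ∧ ∃ y : R, y ≠ 0 ∧ x * y = 0}

lemma adjR (a v : RV R) : (zdvGraphRing R).Adj a v ↔ (a : R) * v = 0 := by
  constructor
  · exact fun h => h.2
  · intro h
    refine ⟨fun hav => ?_, h⟩
    cases hav
    rw [BooleanRing.mul_self] at h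
    exact a.2.1 h

lemma ring1 (a b : RV R) (h : ∀ v : RV R, (a : R) * v = 0 ↔ (b : R) * v = 0) : a = b := by
  have key : ∀ x y : RV R, (∀ v : RV R, (x : R) * v = 0 ↔ (y : R) * v = 0) →
      (x : R) * (1 + y) = 0 := by
    intro x y hxy
    by_contra hw
    have hwb : ((x : R) * (1 + y)) * y = 0 := by
      linear_combination (x : R) * BooleanRing.mul_self (y : R) +
        BooleanRing.add_self ((x : R) * (y : R))
    have hiff := hxy ⟨(x : R) * (1 + y), hw, y, y.2.1, hwb⟩
    have hyv : (y : R) * ((x : R) * (1 + (y : R))) = 0 := by linear_combination hwb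
    have hxv : (x : R) * ((x : R) * (1 + (y : R))) = 0 := hiff.mpr hyv
    apply hw
    calc (x : R) * (1 + y) = (x : R) * ((x : R) * (1 + y)) := by
          linear_combination (-(1 + (y : R))) * BooleanRing.mul_self (x : R)
      _ = 0 := hxv
  have h1 := key a b h
  have h2 := key b a (fun v => (h v).symm)
  have e1 : (a : R) = a * b := by
    linear_combination h1 - BooleanRing.add_self ((a : R) * (b : R))
  have e2 : (b : R) = b * a := by
    linear_combination h2 - BooleanRing.add_self ((b : R) * (a : R))
  exact Subtype.ext (by linear_combination e1 - e2)

lemma ring2a (a : RV R) :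
    ∃ b : RV R, (a : R) * b = 0 ∧ ∀ v : RV R, ¬ ((a : R) * v = 0 ∧ (b : R) * v = 0) := by
  obtain ⟨y, hy0, hay⟩ := a.2.2
  have h1 : (1 : R) + a ≠ 0 := by
    intro h
    have ha1 : (a : R) = 1 := by linear_combination BooleanRing.add_self (a : R) - h
    apply hy0
    calc y = (a : R) * y := by rw [ha1, one_mul]
      _ = 0 := hay
  have hba : ((1 : R) + a) * a = 0 := by
    linear_combination BooleanRing.mul_self (a : R) + BooleanRing.add_self (a : R)
  refine ⟨⟨(1 : R) + a, h1, a, a.2.1, hba⟩, by linear_combination hba, ?_⟩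
  rintro v ⟨hav, hbv⟩
  apply v.2.1
  show (v : R) = 0
  linear_combination hbv - hav

lemma ring2b (a b : RV R) (hab : (a : R) * b = 0)
    (hcl : ∀ v : RV R, ¬ ((a : R) * v = 0 ∧ (b : R) * v = 0)) : (b : R) = 1 + a := by
  by_contra hne
  have hw0 : (1 : R) + a + b ≠ 0 := by
    intro h
    apply hne
    linear_combination h - BooleanRing.add_self (1 + (a : R))
  have hwa : ((1 : R) + a + b) * a = 0 := by
    linear_combination BooleanRing.mul_self (a : R) + BooleanRing.add_self (a : R) + hab
  have hwb : ((1 : R) + a + b) * b = 0 := by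
    linear_combination BooleanRing.mul_self (b : R) + BooleanRing.add_self (b : R) + hab
  exact hcl ⟨(1 : R) + a + b, hw0, a, a.2.1, hwa⟩
    ⟨by linear_combination hwa, by linear_combination hwb⟩

lemma ring3 (a b c : RV R) (hca : (a : R) * c = 0) (hcb : (b : R) * c = 0) :
    ∃ z : RV R, ∀ v : RV R, ((z : R) * v = 0 ↔ ((a : R) * v = 0 ∧ (b : R) * v = 0)) := by
  have has : (a : R) * ((a : R) + b + a * b) = a := by
    linear_combination (1 + (b : R)) * BooleanRing.mul_self (a : R) +
      BooleanRing.add_self ((a : R) * (b : R))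
  have hbs : (b : R) * ((a : R) + b + a * b) = b := by
    linear_combination (1 + (a : R)) * BooleanRing.mul_self (b : R) +
      BooleanRing.add_self ((a : R) * (b : R))
  have hs0 : (a : R) + b + a * b ≠ 0 := by
    intro h
    apply a.2.1
    rw [← has, h, mul_zero]
  have hsc : ((a : R) + b + a * b) * (c : R) = 0 := by
    linear_combination (1 + (b : R)) * hca + hcb
  refine ⟨⟨(a : R) + b + a * b, hs0, c, c.2.1, hsc⟩, ?_⟩
  intro v
  constructor
  · intro hzv
    have hsv : ((a : R) + b + a * b) * (v : R) = 0 := hzv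
    constructor
    · rw [← has, mul_assoc, hsv, mul_zero]
    · rw [← hbs, mul_assoc, hsv, mul_zero]
  · rintro ⟨hav, hbv⟩
    show ((a : R) + b + a * b) * (v : R) = 0
    linear_combination (1 + (b : R)) * hav + hbv

end RingSide

section RingTransfer

variable {R : Type u} [BooleanRing R] {α : Type v} {G : SimpleGraph α}

theorem keyAdjR (f : zdvGraphRing R ≃g G) (c : RV R) (w : α) :
    G.Adj (f c) w ↔ (c : R) * (f.symm w : R) = 0 := by
  rw [← adjR]
  conv_lhs => rw [← f.apply_symm_apply w]
  exact f.map_adj_iff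

theorem adjMapR (f : zdvGraphRing R ≃g G) (a v : RV R) :
    G.Adj (f a) (f v) ↔ (a : R) * v = 0 := by
  rw [f.map_adj_iff, adjR]

end RingTransfer

@[reducible]
def ringCSWZ (R : Type u) [BooleanRing R] : CommSemigroupWithZero R :=
  { (inferInstance : CommSemigroup R) with
    zero := (0 : R)
    zero_mul' := zero_mul }

/-- Theorem 3.7: a nonempty connected simple graph `G` is a Boolean graph (the zero-divisor
graph of some Boolean ring) iff (1) `G` is uniquely determined by neighbourhoods,
(2) `G` is uniquely complemented, (3) any nonempty intersection of two neighbourhoods is a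
neighbourhood, and (4) `G` is the zero-divisor graph of some Boolean semigroup. -/
theorem stmt19 {α : Type v} (G : SimpleGraph α) (hG : G.Connected) :
    (∃ (R : Type u) (inst : BooleanRing R), Nonempty ((@zdvGraphRing R inst) ≃g G)) ↔
    ((∀ x y : α, G.neighborSet x = G.neighborSet y → x = y) ∧
     ((∀ x : α, ∃ y : α, Perp G x y) ∧
       (∀ x y z : α, Perp G x y → Perp G x z → G.neighborSet y = G.neighborSet z)) ∧
     (∀ x y : α, (G.neighborSet x ∩ G.neighborSet y).Nonempty →
       ∃ z : α, G.neighborSet z = G.neighborSet x ∩ G.neighborSet y) ∧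
     (∃ (S : Type u) (inst : CommSemigroupWithZero S),
       (∀ a : S, a * a = a) ∧ Nonempty ((@zdvGraph S inst) ≃g G))) := by
  constructor
  · rintro ⟨R, instR, ⟨f⟩⟩
    refine ⟨?_, ⟨?_, ?_⟩, ?_, ?_⟩
    · -- (1) uniquely determined
      intro x y hN
      have hfs : f.symm x = f.symm y := by
        apply ring1
        intro v
        rw [← adjMapR f (f.symm x) v, ← adjMapR f (f.symm y) v,
          f.apply_symm_apply, f.apply_symm_apply]
        exact Set.ext_iff.mp hN (f v)
      have := congrArg f hfs
      rwa [f.apply_symm_apply, f.apply_symm_apply] at this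
    · -- (2a) complement exists
      intro x
      obtain ⟨b, hab, hcl⟩ := ring2a (R := R) (f.symm x)
      refine ⟨f b, ?_, ?_⟩
      · have := (adjMapR f (f.symm x) b).mpr hab
        rwa [f.apply_symm_apply] at this
      · rintro z ⟨hxz, hbz⟩
        apply hcl (f.symm z)
        constructor
        · exact (keyAdjR f (f.symm x) z).mp (by rwa [f.apply_symm_apply])
        · exact (keyAdjR f b z).mp hbz
    · -- (2b) uniqueness of complements
      intro x y z hxy hxz
      have key : ∀ w : α, Perp G x w → (f.symm w : R) = 1 + (f.symm x : R) := by
        intro w hw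
        apply ring2b
        · exact (keyAdjR f (f.symm x) w).mp (by rw [f.apply_symm_apply]; exact hw.1)
        · rintro v ⟨hv1, hv2⟩
          apply hw.2 (f v)
          constructor
          · have := (adjMapR f (f.symm x) v).mpr hv1
            rwa [f.apply_symm_apply] at this
          · have := (adjMapR f (f.symm w) v).mpr hv2
            rwa [f.apply_symm_apply] at this
      have hyz : y = z := by
        have h1 : f.symm y = f.symm z := Subtype.ext ((key y hxy).trans (key z hxz).symm)
        have := congrArg f h1
        rwa [f.apply_symm_apply, f.apply_symm_apply] at this
      rw [hyz]
    · -- (3) intersections of neighbourhoods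
      rintro x y ⟨w, hwx, hwy⟩
      have h1 : (f.symm x : R) * (f.symm w : R) = 0 :=
        (keyAdjR f (f.symm x) w).mp (by rw [f.apply_symm_apply]; exact hwx)
      have h2 : (f.symm y : R) * (f.symm w : R) = 0 :=
        (keyAdjR f (f.symm y) w).mp (by rw [f.apply_symm_apply]; exact hwy)
      obtain ⟨z, hzv⟩ := ring3 (f.symm x) (f.symm y) (f.symm w) h1 h2
      refine ⟨f z, ?_⟩
      ext w'
      simp only [SimpleGraph.mem_neighborSet, Set.mem_inter_iff]
      have hA := keyAdjR f z w'
      have hB1 := keyAdjR f (f.symm x) w'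
      rw [f.apply_symm_apply] at hB1
      have hB2 := keyAdjR f (f.symm y) w'
      rw [f.apply_symm_apply] at hB2
      rw [hA, hB1, hB2]
      exact hzv (f.symm w')
    · -- (4) Boolean semigroup
      exact ⟨R, ringCSWZ R, fun a => BooleanRing.mul_self a, ⟨f⟩⟩
  · rintro ⟨h1, ⟨h2a, _h2b⟩, h3, S₀, inst₀, hB₀, ⟨e₀⟩⟩
    letI := inst₀
    letI instW := withOneCSWZ S₀
    obtain ⟨w⟩ := wIso_ex S₀
    let e : (@zdvGraph (WithOne S₀) instW) ≃g G := w.symm.trans e₀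
    have hBW : ∀ a : WithOne S₀, a * a = a := by
      intro a
      induction a using WithOne.recOneCoe with
      | one => exact mul_one 1
      | coe x => rw [← WithOne.coe_mul, hB₀ x]
    have hne : Nonempty (SV (WithOne S₀)) := by
      obtain ⟨x⟩ := hG.nonempty
      exact ⟨e.symm x⟩
    obtain ⟨R, instR, ⟨iso⟩⟩ := mainCons hBW 1 one_mul hne
      (transfer1 hBW e h1) (transfer2 hBW e h2a) (transfer3 hBW e h3)
    exact ⟨R, instR, ⟨iso.trans e⟩⟩
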